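/- Let (X, I) be a p-extendible independence system (p a positive integer), f : 2^X → ℝ≥0 monotone submodular, and 0 < α ≤ 1. Suppose e₁, …, e_k is an α-approximate greedy run: Sᵢ = {e₁,…,eᵢ} ∈ I for all i, each eᵢ satisfies f_{S_{i−1}}(eᵢ) ≥ α · max{ f_{S_{i−1}}(e) : e ∉ S_{i−1}, S_{i−1} ∪ {e} ∈ I }, and S_k is a maximal independent set. If the instance is ((p+α)/α)-stable with unique optimal solution S*, then S_k = S*. -/

import Mathlib

open Finset

/-- A downward-closed independence system on the finite type `α`. -/
def DownClosed {α : Type*} (I : Finset α → Prop) : Prop :=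
  I ∅ ∧ ∀ A B : Finset α, I A → B ⊆ A → I B
/-- `(X, I)` is `p`-extendible: whenever `A ⊆ B`, `A, B ∈ I` and `A ∪ {e} ∈ I`,
there is `Z ⊆ B \ A` with `|Z| ≤ p` and `(B \ Z) ∪ {e} ∈ I`. -/
def Extendible {α : Type*} [DecidableEq α] (p : ℕ) (I : Finset α → Prop) : Prop :=
  ∀ A B : Finset α, ∀ e : α, A ⊆ B → I A → I B → I (insert e A) →
    ∃ Z ⊆ B \ A, Z.card ≤ p ∧ I (insert e (B \ Z))
/-- Monotonicity of a set function. -/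
def MonotoneFn {α : Type*} (f : Finset α → ℝ) : Prop :=
  ∀ A B : Finset α, A ⊆ B → f A ≤ f B

/-- Submodularity of a set function. -/
def SubmodularFn {α : Type*} [DecidableEq α] (f : Finset α → ℝ) : Prop :=
  ∀ A B : Finset α, f (A ∪ B) + f (A ∩ B) ≤ f A + f B

/-- `f'` is a `γ`-perturbation of the monotone submodular function `f`. -/
def IsPerturbation {α : Type*} [DecidableEq α] (γ : ℝ) (f f' : Finset α → ℝ) : Prop :=
  (∀ S : Finset α, 0 ≤ f' S) ∧ MonotoneFn f' ∧ SubmodularFn f' ∧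
  (∀ S : Finset α, f S ≤ f' S ∧ f' S ≤ γ * f S) ∧
  ∀ S : Finset α, ∀ j ∉ S,
    f (insert j S) - f S ≤ f' (insert j S) - f' S ∧
    (f' (insert j S) - f' S) - (f (insert j S) - f S) ≤ (γ - 1) * f {j}
/-- The submodular instance `(I, f)` is `γ`-stable with (unique) optimal solution `S`:
for every `γ`-perturbation `f'` of `f`, `S` is the unique maximizer of `f'` over `I`. -/
def SubmodStable {α : Type*} [DecidableEq α] (I : Finset α → Prop)
    (f : Finset α → ℝ) (γ : ℝ) (S : Finset α) : Prop :=
  I S ∧ ∀ f' : Finset α → ℝ, IsPerturbation γ f f' →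
    ∀ T : Finset α, I T → T ≠ S → f' T < f' S

/-- An `a`-approximate greedy run for a set function `f`: every prefix is independent,
each `eᵢ` has marginal value at least `a` times that of any feasible addition, and the
final set is maximal. -/
def ApproxGreedyRunSub {α : Type*} [DecidableEq α] (I : Finset α → Prop)
    (f : Finset α → ℝ) (a : ℝ) (l : List α) : Prop :=
  (∀ i : Fin l.length,
    l.get i ∉ (l.take i.val).toFinset ∧
    I (insert (l.get i) (l.take i.val).toFinset) ∧
    ∀ e : α, e ∉ (l.take i.val).toFinset → I (insert e (l.take i.val).toFinset) →
      a * (f (insert e (l.take i.val).toFinset) - f (l.take i.val).toFinset) ≤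
        f (insert (l.get i) (l.take i.val).toFinset) - f (l.take i.val).toFinset) ∧
  ∀ e : α, e ∉ l.toFinset → ¬ I (insert e l.toFinset)

section AuxDefs
variable {α : Type*} [DecidableEq α]

/-- Prefix finset of a list. -/
def gP (l : List α) (i : ℕ) : Finset α := (l.take i).toFinset

/-- Marginal gain at step `i`. -/
def gD (f : Finset α → ℝ) (l : List α) (i : ℕ) : ℝ := f (gP l (i+1)) - f (gP l i)

/-- The modular bonus function. -/
def gw (f : Finset α → ℝ) (l : List α) (x : α) (T : Finset α) : ℝ :=
  ∑ i ∈ Finset.range l.length, if l.getD i x ∈ T then gD f l i else 0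

lemma gP_mono (l : List α) {i j : ℕ} (h : i ≤ j) : gP l i ⊆ gP l j := by
  intro y hy
  rw [gP, List.mem_toFinset] at hy ⊢
  have hij : l.take i = (l.take j).take i := by rw [List.take_take, min_eq_left h]
  rw [hij] at hy
  exact List.take_subset _ _ hy

lemma gP_subset_toFinset (l : List α) (i : ℕ) : gP l i ⊆ l.toFinset := by
  intro y hy
  rw [gP, List.mem_toFinset] at hy
  exact List.mem_toFinset.2 (List.take_subset _ _ hy)

lemma gP_length (l : List α) : gP l l.length = l.toFinset := by
  rw [gP, List.take_length]

lemma gP_zero (l : List α) : gP l 0 = ∅ := by simp [gP]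

lemma gP_succ (l : List α) (x : α) {i : ℕ} (h : i < l.length) :
    gP l (i+1) = insert (l.getD i x) (gP l i) := by
  rw [gP, gP, List.take_succ]
  have h1 : l[i]? = some (l.getD i x) := by
    rw [List.getD_eq_getElem l x h]
    simp [List.getElem?_eq_getElem, h]
  rw [h1]
  ext y; simp [or_comm]

lemma marg {f : Finset α → ℝ} (hsub : SubmodularFn f) {A B : Finset α} {t : α}
    (hAB : A ⊆ B) (ht : t ∉ B) : f (insert t B) - f B ≤ f (insert t A) - f A := by
  have h := hsub (insert t A) B
  have h1 : insert t A ∪ B = insert t B := by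
    rw [Finset.insert_union, Finset.union_eq_right.2 hAB]
  have h2 : insert t A ∩ B = A := by
    rw [Finset.insert_inter_of_notMem ht, Finset.inter_eq_left.2 hAB]
  rw [h1, h2] at h; linarith

lemma union_bound {f : Finset α → ℝ} (hsub : SubmodularFn f)
    (B C : Finset α) : f (B ∪ C) ≤ f B + ∑ t ∈ C \ B, (f (insert t B) - f B) := by
  induction C using Finset.induction_on with
  | empty => simp
  | @insert x C hx ih =>
    by_cases hxB : x ∈ B
    · have h1 : B ∪ insert x C = B ∪ C := by
        rw [Finset.union_insert, Finset.insert_eq_self.2 (Finset.mem_union_left _ hxB)]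
      have h2 : insert x C \ B = C \ B := Finset.insert_sdiff_of_mem _ hxB
      rw [h1, h2]; exact ih
    · have hxBC : x ∉ B ∪ C := by simp [hxB, hx]
      have h1 : B ∪ insert x C = insert x (B ∪ C) := by rw [Finset.union_insert]
      have h2 : insert x C \ B = insert x (C \ B) := Finset.insert_sdiff_of_notMem _ hxB
      have h3 : x ∉ C \ B := by simp [hx]
      rw [h1, h2, Finset.sum_insert h3]
      have h4 : f (insert x (B ∪ C)) - f (B ∪ C) ≤ f (insert x B) - f B :=
        marg hsub Finset.subset_union_left hxBC
      linarith

lemma gD_nonneg {f : Finset α → ℝ} (hmono : MonotoneFn f) (l : List α) (i : ℕ) :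
    0 ≤ gD f l i :=
  sub_nonneg.2 (hmono _ _ (gP_mono l (Nat.le_succ i)))

lemma gw_nonneg {f : Finset α → ℝ} (hmono : MonotoneFn f) (l : List α) (x : α)
    (T : Finset α) : 0 ≤ gw f l x T := by
  apply Finset.sum_nonneg
  intro i _
  split
  · exact gD_nonneg hmono l i
  · exact le_refl 0

lemma gw_mono {f : Finset α → ℝ} (hmono : MonotoneFn f) (l : List α) (x : α)
    {S T : Finset α} (h : S ⊆ T) : gw f l x S ≤ gw f l x T := by
  apply Finset.sum_le_sum
  intro i _
  by_cases hS : l.getD i x ∈ S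
  · rw [if_pos hS, if_pos (h hS)]
  · rw [if_neg hS]
    split
    · exact gD_nonneg hmono l i
    · exact le_refl 0

lemma gw_modular {f : Finset α → ℝ} (l : List α) (x : α) (A B : Finset α) :
    gw f l x (A ∪ B) + gw f l x (A ∩ B) = gw f l x A + gw f l x B := by
  rw [gw, gw, gw, gw, ← Finset.sum_add_distrib, ← Finset.sum_add_distrib]
  apply Finset.sum_congr rfl
  intro i _
  set e := l.getD i x with he
  by_cases hA : e ∈ A <;> by_cases hB : e ∈ B <;>
    simp [Finset.mem_union, Finset.mem_inter, hA, hB]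

lemma gw_diff {f : Finset α → ℝ} (hmono : MonotoneFn f) (hsub : SubmodularFn f)
    (l : List α) (x : α)
    (hnd : ∀ i, i < l.length → l.getD i x ∉ gP l i)
    {S T : Finset α} (hST : S ⊆ T) :
    gw f l x T - gw f l x S ≤ f ((T \ S) ∩ l.toFinset) - f ∅ := by
  have key : ∀ i ∈ Finset.range l.length,
      (if l.getD i x ∈ T then gD f l i else 0) - (if l.getD i x ∈ S then gD f l i else 0)
      ≤ f ((T \ S) ∩ gP l (i+1)) - f ((T \ S) ∩ gP l i) := by
    intro i hi
    rw [Finset.mem_range] at hi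
    have hmon : f ((T \ S) ∩ gP l i) ≤ f ((T \ S) ∩ gP l (i+1)) :=
      hmono _ _ (Finset.inter_subset_inter (Finset.Subset.refl _) (gP_mono l (Nat.le_succ i)))
    by_cases hTe : l.getD i x ∈ T
    · by_cases hSe : l.getD i x ∈ S
      · rw [if_pos hTe, if_pos hSe]; linarith
      · rw [if_pos hTe, if_neg hSe]
        have ht : l.getD i x ∉ gP l i := hnd i hi
        have h1 : f (insert (l.getD i x) (gP l i)) - f (gP l i)
            ≤ f (insert (l.getD i x) ((T \ S) ∩ gP l i)) - f ((T \ S) ∩ gP l i) :=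
          marg hsub Finset.inter_subset_right ht
        have h2 : insert (l.getD i x) ((T \ S) ∩ gP l i) = (T \ S) ∩ gP l (i+1) := by
          rw [gP_succ l x hi, Finset.inter_comm (T \ S) (insert (l.getD i x) (gP l i)),
            Finset.insert_inter_of_mem (Finset.mem_sdiff.2 ⟨hTe, hSe⟩),
            Finset.inter_comm (gP l i) (T \ S)]
        have h3 : gD f l i = f (insert (l.getD i x) (gP l i)) - f (gP l i) := by
          rw [gD, gP_succ l x hi]
        rw [h3, ← h2]
        linarith
    · have hSe : l.getD i x ∉ S := fun h => hTe (hST h)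
      rw [if_neg hTe, if_neg hSe]; linarith
  have hcalc : gw f l x T - gw f l x S
      = ∑ i ∈ Finset.range l.length,
        ((if l.getD i x ∈ T then gD f l i else 0) - (if l.getD i x ∈ S then gD f l i else 0)) := by
    rw [gw, gw, Finset.sum_sub_distrib]
  rw [hcalc]
  calc ∑ i ∈ Finset.range l.length,
        ((if l.getD i x ∈ T then gD f l i else 0) - (if l.getD i x ∈ S then gD f l i else 0))
      ≤ ∑ i ∈ Finset.range l.length,
        (f ((T \ S) ∩ gP l (i+1)) - f ((T \ S) ∩ gP l i)) := Finset.sum_le_sum key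
    _ = f ((T \ S) ∩ gP l l.length) - f ((T \ S) ∩ gP l 0) :=
        Finset.sum_range_sub (fun n => f ((T \ S) ∩ gP l n)) l.length
    _ ≤ f ((T \ S) ∩ l.toFinset) - f ∅ := by
        rw [gP_length, gP_zero, Finset.inter_empty]

end AuxDefs

section Charge
variable {α : Type*} [DecidableEq α]

lemma chargeB (p : ℕ) (I : Finset α → Prop)
    (hdc : DownClosed I) (hext : Extendible p I)
    (f : Finset α → ℝ) (hsub : SubmodularFn f)
    (a : ℝ) (ha0 : 0 < a)
    (l : List α) (x : α)
    (hg : ∀ i, i < l.length →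
       l.getD i x ∉ gP l i ∧ I (insert (l.getD i x) (gP l i)) ∧
       ∀ e : α, e ∉ gP l i → I (insert e (gP l i)) →
         a * (f (insert e (gP l i)) - f (gP l i)) ≤ gD f l i)
    (hmD : ∀ i, 0 ≤ gD f l i)
    (T : Finset α) (hIT : I T) (hIl : I l.toFinset) :
    ∀ i, i ≤ l.length → ∃ U, I U ∧ gP l i ⊆ U ∧ U ⊆ gP l i ∪ T ∧ T ∩ l.toFinset ⊆ U ∧
      ∑ t ∈ T \ U, (f (insert t l.toFinset) - f l.toFinset)
        ≤ ((p : ℝ) / a) * ∑ j ∈ Finset.range i, (if l.getD j x ∈ T then 0 else gD f l j) := by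
  have hpa : (0:ℝ) ≤ (p:ℝ) / a := div_nonneg (Nat.cast_nonneg p) (le_of_lt ha0)
  intro i
  induction i with
  | zero =>
    intro _
    refine ⟨T, hIT, ?_, Finset.subset_union_right, Finset.inter_subset_left, ?_⟩
    · rw [gP_zero]; exact Finset.empty_subset T
    · simp
  | succ i ih =>
    intro hi1
    have hi : i < l.length := hi1
    obtain ⟨U, hIU, hPU, hUPT, hTU, hsum⟩ := ih (le_of_lt hi)
    set e := l.getD i x with he_def
    obtain ⟨hgnd, hgI, hgmax⟩ := hg i hi
    have hePk : e ∈ l.toFinset := by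
      rw [he_def, List.getD_eq_getElem l x hi]
      exact List.mem_toFinset.2 (List.getElem_mem hi)
    have hgPsucc : gP l (i+1) = insert e (gP l i) := gP_succ l x hi
    have hrhs : ∑ j ∈ Finset.range (i+1), (if l.getD j x ∈ T then 0 else gD f l j)
        = (∑ j ∈ Finset.range i, (if l.getD j x ∈ T then 0 else gD f l j))
          + (if e ∈ T then 0 else gD f l i) :=
      Finset.sum_range_succ _ i
    have hite0 : (0:ℝ) ≤ (if e ∈ T then 0 else gD f l i) := by
      split
      · exact le_refl 0
      · exact hmD i
    by_cases heU : e ∈ U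
    · refine ⟨U, hIU, ?_, ?_, hTU, ?_⟩
      · rw [hgPsucc]; exact Finset.insert_subset heU hPU
      · exact hUPT.trans (Finset.union_subset_union_left (gP_mono l (Nat.le_succ i)))
      · rw [hrhs, mul_add]
        nlinarith [mul_nonneg hpa hite0]
    · have heT : e ∉ T := fun h => heU (hTU (Finset.mem_inter.2 ⟨h, hePk⟩))
      set A := gP l i ∪ (T ∩ l.toFinset) with hA
      have hAU : A ⊆ U := Finset.union_subset hPU hTU
      have hAPk : A ⊆ l.toFinset :=
        Finset.union_subset (gP_subset_toFinset l i) Finset.inter_subset_right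
      have hIA : I A := hdc.2 _ _ hIl hAPk
      have hIeA : I (insert e A) := hdc.2 _ _ hIl (Finset.insert_subset hePk hAPk)
      obtain ⟨Z, hZU, hZcard, hIU'⟩ := hext A U e hAU hIA hIU hIeA
      have hZT : ∀ z ∈ Z, z ∈ T ∧ z ∉ l.toFinset := by
        intro z hz
        have hz' := hZU hz
        rw [Finset.mem_sdiff] at hz'
        obtain ⟨hzU, hzA⟩ := hz'
        have hznP : z ∉ gP l i := fun h => hzA (Finset.mem_union_left _ h)
        have hzT : z ∈ T := by
          rcases Finset.mem_union.1 (hUPT hzU) with h | h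
          · exact absurd h hznP
          · exact h
        refine ⟨hzT, fun h => hzA (Finset.mem_union_right _ (Finset.mem_inter.2 ⟨hzT, h⟩))⟩
      refine ⟨insert e (U \ Z), hIU', ?_, ?_, ?_, ?_⟩
      · rw [hgPsucc]
        apply Finset.insert_subset_insert
        intro y hy
        rw [Finset.mem_sdiff]
        refine ⟨hPU hy, fun hyZ => ?_⟩
        exact (Finset.mem_sdiff.1 (hZU hyZ)).2 (Finset.mem_union_left _ hy)
      · rw [hgPsucc]
        apply Finset.insert_subset (Finset.mem_union_left _ (Finset.mem_insert_self e _))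
        intro y hy
        rcases Finset.mem_union.1 (hUPT (Finset.mem_sdiff.1 hy).1) with h | h
        · exact Finset.mem_union_left _ (Finset.mem_insert_of_mem h)
        · exact Finset.mem_union_right _ h
      · intro y hy
        apply Finset.mem_insert_of_mem
        rw [Finset.mem_sdiff]
        refine ⟨hTU hy, fun hyZ => ?_⟩
        exact (Finset.mem_sdiff.1 (hZU hyZ)).2 (Finset.mem_union_right _ hy)
      · have hset : T \ insert e (U \ Z) = (T \ U) ∪ Z := by
          ext y
          simp only [Finset.mem_sdiff, Finset.mem_insert, Finset.mem_union, not_or,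
            not_and, not_not]
          constructor
          · rintro ⟨hyT, hyne, hyUZ⟩
            by_cases hyU : y ∈ U
            · exact Or.inr (hyUZ hyU)
            · exact Or.inl ⟨hyT, hyU⟩
          · rintro (⟨hyT, hyU⟩ | hyZ)
            · refine ⟨hyT, fun hye => heT (hye ▸ hyT), fun h => absurd h hyU⟩
            · have hyT := (hZT y hyZ).1
              refine ⟨hyT, fun hye => heT (hye ▸ hyT), fun _ => hyZ⟩
        have hdisj : Disjoint (T \ U) Z := by
          rw [Finset.disjoint_left]
          intro y hy hyZ
          exact (Finset.mem_sdiff.1 hy).2 (Finset.mem_sdiff.1 (hZU hyZ)).1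
        rw [hset, Finset.sum_union hdisj]
        have hZbound : ∀ t ∈ Z, f (insert t l.toFinset) - f l.toFinset ≤ (1/a) * gD f l i := by
          intro t ht
          obtain ⟨htT, htnPk⟩ := hZT t ht
          have htU : t ∈ U := (Finset.mem_sdiff.1 (hZU ht)).1
          have htnP : t ∉ gP l i :=
            fun h => (Finset.mem_sdiff.1 (hZU ht)).2 (Finset.mem_union_left _ h)
          have hIt : I (insert t (gP l i)) :=
            hdc.2 _ _ hIU (Finset.insert_subset htU hPU)
          have hgr := hgmax t htnP hIt
          have hmarg : f (insert t l.toFinset) - f l.toFinset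
              ≤ f (insert t (gP l i)) - f (gP l i) :=
            marg hsub (gP_subset_toFinset l i) htnPk
          rw [one_div, ← div_eq_inv_mul, le_div_iff₀ ha0]
          nlinarith
        have hZsum : ∑ t ∈ Z, (f (insert t l.toFinset) - f l.toFinset)
            ≤ ((p:ℝ)/a) * gD f l i := by
          calc ∑ t ∈ Z, (f (insert t l.toFinset) - f l.toFinset)
              ≤ Z.card • ((1/a) * gD f l i) := Finset.sum_le_card_nsmul Z _ _ hZbound
            _ = (Z.card : ℝ) * ((1/a) * gD f l i) := nsmul_eq_mul _ _
            _ ≤ (p:ℝ) * ((1/a) * gD f l i) := by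
                apply mul_le_mul_of_nonneg_right
                · exact_mod_cast hZcard
                · exact mul_nonneg (by positivity) (hmD i)
            _ = ((p:ℝ)/a) * gD f l i := by ring
        rw [hrhs, if_neg heT, mul_add]
        linarith
end Charge

/-- On a `((p+a)/a)`-stable instance of monotone submodular maximization
over a `p`-extendible independence system, every `a`-approximate greedy run outputs the
optimal solution `S*`. -/
theorem approx_greedy_recovers_submodular_pExtendible
    {α : Type*} [Fintype α] [DecidableEq α] (p : ℕ) (hp : 0 < p)
    (I : Finset α → Prop) (hdc : DownClosed I) (hext : Extendible p I)
    (f : Finset α → ℝ) (hf0 : ∀ S : Finset α, 0 ≤ f S)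
    (hmono : MonotoneFn f) (hsub : SubmodularFn f)
    (a : ℝ) (ha0 : 0 < a) (ha1 : a ≤ 1)
    (Sstar : Finset α) (hstable : SubmodStable I f (((p : ℝ) + a) / a) Sstar)
    (l : List α) (hl : ApproxGreedyRunSub I f a l) :
    l.toFinset = Sstar := by
  by_cases hnil : l = []
  · subst hnil
    by_contra hne
    have hSne : Sstar.Nonempty := by
      rw [Finset.nonempty_iff_ne_empty]
      intro h
      exact hne (by simp [h])
    obtain ⟨s, hs⟩ := hSne
    refine hl.2 s (by simp) ?_
    apply hdc.2 Sstar _ hstable.1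
    intro y hy
    simp only [List.toFinset_nil, Finset.mem_insert, Finset.notMem_empty, or_false] at hy
    rwa [hy]
  · obtain ⟨x, -⟩ := List.exists_mem_of_ne_nil l hnil
    have hklen : 0 < l.length := List.length_pos_iff.2 hnil
    -- convert the greedy hypotheses
    have hg : ∀ i, i < l.length →
        l.getD i x ∉ gP l i ∧ I (insert (l.getD i x) (gP l i)) ∧
        ∀ e : α, e ∉ gP l i → I (insert e (gP l i)) →
          a * (f (insert e (gP l i)) - f (gP l i)) ≤ gD f l i := by
      intro i hi
      have h1 := hl.1 ⟨i, hi⟩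
      have hget : l.getD i x = l.get ⟨i, hi⟩ := List.getD_eq_get l x ⟨i, hi⟩
      have hgD : gD f l i = f (insert (l.getD i x) (gP l i)) - f (gP l i) := by
        rw [gD, gP_succ l x hi]
      rw [hget, hgD, hget]
      exact ⟨h1.1, h1.2.1, fun e he hIe => h1.2.2 e he hIe⟩
    have hnd : ∀ i, i < l.length → l.getD i x ∉ gP l i := fun i hi => (hg i hi).1
    have hmD : ∀ i, 0 ≤ gD f l i := gD_nonneg hmono l
    have hIl : I l.toFinset := by
      have hk1 : l.length - 1 < l.length := Nat.sub_lt hklen one_pos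
      have := (hg (l.length - 1) hk1).2.1
      rw [← gP_succ l x hk1, Nat.sub_add_cancel hklen, gP_length] at this
      exact this
    set c : ℝ := (p : ℝ) / a with hc_def
    have hc0 : 0 ≤ c := div_nonneg (Nat.cast_nonneg p) (le_of_lt ha0)
    have hγ : ((p : ℝ) + a) / a = c + 1 := by
      rw [hc_def]
      field_simp
    set f' : Finset α → ℝ := fun S => f S + c * gw f l x S with hf'_def
    have hf'app : ∀ S, f' S = f S + c * gw f l x S := fun S => rfl
    -- the perturbation bound: gw difference
    have hwdiff : ∀ S T : Finset α, S ⊆ T →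
        gw f l x T - gw f l x S ≤ f ((T \ S) ∩ l.toFinset) - f ∅ :=
      fun S T hST => gw_diff hmono hsub l x hnd hST
    have hw_le : ∀ S : Finset α, gw f l x S ≤ f S := by
      intro S
      have h0 : gw f l x ∅ = 0 := by
        rw [gw]
        apply Finset.sum_eq_zero
        intro i _
        simp
      have := hwdiff ∅ S (Finset.empty_subset S)
      rw [h0, Finset.sdiff_empty] at this
      have h1 : f (S ∩ l.toFinset) ≤ f S := hmono _ _ Finset.inter_subset_left
      have h2 := hf0 ∅
      linarith
    have hpert : IsPerturbation (((p : ℝ) + a) / a) f f' := by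
      refine ⟨?_, ?_, ?_, ?_, ?_⟩
      · intro S
        exact add_nonneg (hf0 S) (mul_nonneg hc0 (gw_nonneg hmono l x S))
      · intro A B hAB
        rw [hf'app, hf'app]
        exact add_le_add (hmono _ _ hAB)
          (mul_le_mul_of_nonneg_left (gw_mono hmono l x hAB) hc0)
      · intro A B
        have h1 := hsub A B
        have h2 : c * gw f l x (A ∪ B) + c * gw f l x (A ∩ B)
            = c * gw f l x A + c * gw f l x B := by
          rw [← mul_add, gw_modular, mul_add]
        rw [hf'app, hf'app, hf'app, hf'app]
        linarith
      · intro S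
        constructor
        · rw [hf'app]
          exact le_add_of_nonneg_right (mul_nonneg hc0 (gw_nonneg hmono l x S))
        · rw [hf'app, hγ]
          have := mul_le_mul_of_nonneg_left (hw_le S) hc0
          nlinarith
      · intro S j hj
        have hdiff : f' (insert j S) - f' S
            = (f (insert j S) - f S) + c * (gw f l x (insert j S) - gw f l x S) := by
          rw [hf'app, hf'app]; ring
        have hwm : 0 ≤ gw f l x (insert j S) - gw f l x S :=
          sub_nonneg.2 (gw_mono hmono l x (Finset.subset_insert j S))
        constructor
        · rw [hdiff]
          nlinarith [mul_nonneg hc0 hwm]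
        · rw [hdiff, hγ]
          have hjs : insert j S \ S = {j} := by
            ext y
            simp only [Finset.mem_sdiff, Finset.mem_insert, Finset.mem_singleton]
            constructor
            · rintro ⟨h1 | h1, h2⟩ <;> tauto
            · rintro rfl; exact ⟨Or.inl rfl, hj⟩
          have h1 := hwdiff S (insert j S) (Finset.subset_insert j S)
          rw [hjs] at h1
          have h2 : f ({j} ∩ l.toFinset) ≤ f {j} := hmono _ _ Finset.inter_subset_left
          have h3 := hf0 ∅
          have h4 : gw f l x (insert j S) - gw f l x S ≤ f {j} := by linarith
          have h5 := mul_le_mul_of_nonneg_left h4 hc0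
          linarith
    -- the key inequality : f' Sstar ≤ f' l.toFinset
    obtain ⟨U, hIU, hPU, hUPT, hTU, hsum⟩ :=
      chargeB p I hdc hext f hsub a ha0 l x hg hmD Sstar hstable.1 hIl l.length (le_refl _)
    rw [gP_length] at hPU hUPT
    have hUeq : U = l.toFinset := by
      apply Finset.Subset.antisymm _ hPU
      intro u hu
      by_contra hunot
      exact hl.2 u hunot (hdc.2 _ _ hIU (Finset.insert_subset hu hPU))
    rw [hUeq] at hsum
    have hub := union_bound hsub l.toFinset Sstar
    have hfS : f Sstar ≤ f (l.toFinset ∪ Sstar) := hmono _ _ Finset.subset_union_right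
    have hsum1 : gw f l x Sstar
        + ∑ j ∈ Finset.range l.length, (if l.getD j x ∈ Sstar then 0 else gD f l j)
        = ∑ j ∈ Finset.range l.length, gD f l j := by
      rw [gw, ← Finset.sum_add_distrib]
      apply Finset.sum_congr rfl
      intro j _
      by_cases h : l.getD j x ∈ Sstar
      · rw [if_pos h, if_pos h]; ring
      · rw [if_neg h, if_neg h]; ring
    have hsum2 : gw f l x l.toFinset = ∑ j ∈ Finset.range l.length, gD f l j := by
      rw [gw]
      apply Finset.sum_congr rfl
      intro j hj
      rw [Finset.mem_range] at hj
      rw [if_pos]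
      rw [List.getD_eq_get l x ⟨j, hj⟩]
      exact List.mem_toFinset.2 (List.get_mem l ⟨j, hj⟩)
    have hE : c * gw f l x Sstar
        + c * ∑ j ∈ Finset.range l.length, (if l.getD j x ∈ Sstar then 0 else gD f l j)
        = c * gw f l x l.toFinset := by
      rw [← mul_add, hsum1, hsum2]
    have hsd : Sstar \ l.toFinset = Sstar \ l.toFinset := rfl
    have hkey : f' Sstar ≤ f' l.toFinset := by
      rw [hf'app, hf'app]
      have h5 : ∑ t ∈ Sstar \ l.toFinset, (f (insert t l.toFinset) - f l.toFinset)
          ≤ c * ∑ j ∈ Finset.range l.length,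
              (if l.getD j x ∈ Sstar then 0 else gD f l j) := hsum
      linarith
    by_contra hne
    have := hstable.2 f' hpert l.toFinset hIl hne
    linarith
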